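/- Let c ≤ d be natural numbers and let k ≤ c. Consider the complete bipartite graph K_{d,c} with parts of sizes d and c. If 𝔐 is a family of matchings of size k in K_{d,c} such that the union of any two distinct members of 𝔐 is not a matching (pairwise incompatible), then |𝔐| ≤ d!/(d-k)!. -/

import Mathlib

variable {α β : Type} [DecidableEq α] [DecidableEq β]

/-- A finite set of pairs is (the graph of) a partial injection. -/
def IsPartialInj (s : Finset (α × β)) : Prop :=
  ∀ p ∈ s, ∀ q ∈ s, (p.1 = q.1 → p.2 = q.2) ∧ (p.2 = q.2 → p.1 = q.1)

/-- Two conditions are compatible if their union is still a partial injection. -/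
def Compatible (σ τ : Finset (α × β)) : Prop := IsPartialInj (σ ∪ τ)

lemma descFactorial_add_eq (n k m : ℕ) :
    n.descFactorial (k + m) = n.descFactorial k * (n - k).descFactorial m := by
  induction m with
  | zero => simp
  | succ m ih =>
    rw [Nat.add_succ, Nat.descFactorial_succ, Nat.descFactorial_succ, ih, Nat.sub_sub]
    ring

/-- lower bound on number of embeddings extending a partial injection -/
lemma ext_card_ge (d c k : ℕ) (hkc : k ≤ c) (hcd : c ≤ d)
    (σ : Finset (Fin d × Fin c)) (hinj : IsPartialInj σ) (hcard : σ.card = k) :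
    (d - k).descFactorial (c - k) ≤
      (Finset.univ.filter (fun g : Fin c ↪ Fin d => ∀ p ∈ σ, g p.2 = p.1)).card := by
  classical
  set A : Finset (Fin d) := σ.image Prod.fst with hA
  set B : Finset (Fin c) := σ.image Prod.snd with hB
  have hAcard : A.card = k := by
    rw [hA, Finset.card_image_of_injOn, hcard]
    intro p hp q hq h
    exact Prod.ext h ((hinj p hp q hq).1 h)
  have hBcard : B.card = k := by
    rw [hB, Finset.card_image_of_injOn, hcard]
    intro p hp q hq h
    exact Prod.ext ((hinj p hp q hq).2 h) h
  have hBmem : ∀ b : Fin c, b ∈ B ↔ ∃ a : Fin d, (a, b) ∈ σ := by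
    intro b
    simp only [hB, Finset.mem_image]
    constructor
    · rintro ⟨p, hp, rfl⟩; exact ⟨p.1, hp⟩
    · rintro ⟨a, ha⟩; exact ⟨(a, b), ha, rfl⟩
  -- the map Φ from embeddings of complements to extending embeddings
  have key : ∀ e : {b // b ∈ Bᶜ} ↪ {a // a ∈ Aᶜ}, ∃ g : Fin c ↪ Fin d,
      (∀ p ∈ σ, g p.2 = p.1) ∧ (∀ x : {b // b ∈ Bᶜ}, g x.val = (e x).val) := by
    intro e
    have hmem : ∀ b : Fin c, ¬ (∃ a : Fin d, (a, b) ∈ σ) → b ∈ Bᶜ := by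
      intro b h; rw [Finset.mem_compl, hBmem]; exact h
    refine ⟨⟨fun b => if h : ∃ a : Fin d, (a, b) ∈ σ then h.choose
        else (e ⟨b, hmem b h⟩).val, ?_⟩, ?_, ?_⟩
    · intro b1 b2 heq
      dsimp only at heq
      by_cases h1 : ∃ a : Fin d, (a, b1) ∈ σ <;> by_cases h2 : ∃ a : Fin d, (a, b2) ∈ σ
      · rw [dif_pos h1, dif_pos h2] at heq
        exact (hinj _ h1.choose_spec _ h2.choose_spec).1 heq
      · rw [dif_pos h1, dif_neg h2] at heq
        exfalso
        have : h1.choose ∈ A := by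
          rw [hA, Finset.mem_image]; exact ⟨_, h1.choose_spec, rfl⟩
        rw [heq] at this
        exact (Finset.mem_compl.mp (e ⟨b2, hmem b2 h2⟩).2) this
      · rw [dif_neg h1, dif_pos h2] at heq
        exfalso
        have : h2.choose ∈ A := by
          rw [hA, Finset.mem_image]; exact ⟨_, h2.choose_spec, rfl⟩
        rw [← heq] at this
        exact (Finset.mem_compl.mp (e ⟨b1, hmem b1 h1⟩).2) this
      · rw [dif_neg h1, dif_neg h2] at heq
        have := e.injective (Subtype.val_injective heq)
        exact congrArg Subtype.val this
    · intro p hp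
      have h : ∃ a : Fin d, (a, p.2) ∈ σ := ⟨p.1, hp⟩
      change (if h : ∃ a : Fin d, (a, p.2) ∈ σ then h.choose
        else (e ⟨p.2, hmem p.2 h⟩).val) = p.1
      rw [dif_pos h]
      exact (hinj _ h.choose_spec _ hp).2 rfl
    · intro x
      have h : ¬ ∃ a : Fin d, (a, x.val) ∈ σ := by
        rw [← hBmem]; exact Finset.mem_compl.mp x.2
      change (if h : ∃ a : Fin d, (a, x.val) ∈ σ then h.choose
        else (e ⟨x.val, hmem x.val h⟩).val) = (e x).val
      rw [dif_neg h]
  -- now count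
  choose Φ hΦext hΦval using key
  have hΦinj : Function.Injective Φ := by
    intro e1 e2 h
    ext x
    have h' : (Φ e1) x.val = (Φ e2) x.val := by rw [h]
    have := (hΦval e1 x).symm.trans (h'.trans (hΦval e2 x))
    exact congrArg _ this
  have hcomplA : Fintype.card {a // a ∈ Aᶜ} = d - k := by
    simp [Finset.card_compl, hAcard]
  have hcomplB : Fintype.card {b // b ∈ Bᶜ} = c - k := by
    simp [Finset.card_compl, hBcard]
  calc (d - k).descFactorial (c - k)
      = Fintype.card ({b // b ∈ Bᶜ} ↪ {a // a ∈ Aᶜ}) := by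
        rw [Fintype.card_embedding_eq, hcomplA, hcomplB]
    _ ≤ (Finset.univ.filter (fun g : Fin c ↪ Fin d => ∀ p ∈ σ, g p.2 = p.1)).card := by
        rw [← Fintype.card_coe]
        refine Fintype.card_le_of_injective
          (fun e => ⟨Φ e, Finset.mem_filter.mpr ⟨Finset.mem_univ _, hΦext e⟩⟩) ?_
        intro e1 e2 h
        exact hΦinj (congrArg Subtype.val h)

/-- a family of pairwise incompatible `k`-matchings in the complete
bipartite graph `K_{d,c}` (with `k ≤ c ≤ d`) has size at most `d!/(d-k)!`. -/
theorem pairwise_incompatible_matchings_card_le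
    (d c k : ℕ) (hkc : k ≤ c) (hcd : c ≤ d)
    (𝔐 : Finset (Finset (Fin d × Fin c)))
    (hmatch : ∀ σ ∈ 𝔐, IsPartialInj σ ∧ σ.card = k)
    (hincomp : ∀ σ ∈ 𝔐, ∀ τ ∈ 𝔐, σ ≠ τ → ¬ Compatible σ τ) :
    𝔐.card ≤ d.descFactorial k := by
  classical
  set L := (d - k).descFactorial (c - k) with hL
  set F : Finset (Fin d × Fin c) → Finset (Fin c ↪ Fin d) :=
    fun σ => Finset.univ.filter (fun g => ∀ p ∈ σ, g p.2 = p.1) with hF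
  have hdisj : (𝔐 : Set (Finset (Fin d × Fin c))).PairwiseDisjoint F := by
    intro σ hσ τ hτ hne
    rw [Function.onFun, Finset.disjoint_left]
    intro g hgσ hgτ
    have hgσ' := (Finset.mem_filter.mp hgσ).2
    have hgτ' := (Finset.mem_filter.mp hgτ).2
    refine hincomp σ hσ τ hτ hne ?_
    intro p hp q hq
    have hp' : g p.2 = p.1 := by
      rcases Finset.mem_union.mp hp with h | h
      exacts [hgσ' p h, hgτ' p h]
    have hq' : g q.2 = q.1 := by
      rcases Finset.mem_union.mp hq with h | h
      exacts [hgσ' q h, hgτ' q h]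
    constructor
    · intro h
      exact g.injective (hp'.trans (h.trans hq'.symm))
    · intro h
      rw [← hp', ← hq', h]
  have hsum : 𝔐.card * L ≤ d.descFactorial c := by
    calc 𝔐.card * L = ∑ _σ ∈ 𝔐, L := by rw [Finset.sum_const, smul_eq_mul, mul_comm]
      _ ≤ ∑ σ ∈ 𝔐, (F σ).card := by
          refine Finset.sum_le_sum ?_
          intro σ hσ
          exact ext_card_ge d c k hkc hcd σ (hmatch σ hσ).1 (hmatch σ hσ).2
      _ = (𝔐.biUnion F).card := (Finset.card_biUnion hdisj).symm
      _ ≤ (Finset.univ : Finset (Fin c ↪ Fin d)).card := Finset.card_le_card (Finset.subset_univ _)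
      _ = d.descFactorial c := by
          rw [Finset.card_univ, Fintype.card_embedding_eq, Fintype.card_fin, Fintype.card_fin]
  have hfact : d.descFactorial c = d.descFactorial k * L := by
    rw [hL, ← descFactorial_add_eq, Nat.add_sub_cancel' hkc]
  have hLpos : 0 < L := Nat.pos_of_ne_zero (fun h0 => absurd (Nat.descFactorial_eq_zero_iff_lt.mp h0) (Nat.not_lt.mpr (Nat.sub_le_sub_right hcd k)))
  rw [hfact] at hsum
  exact Nat.le_of_mul_le_mul_right hsum hLpos
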